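/- Let O(n,n;t̲) be the truncated divided power superalgebra and T_H: O(n,n;t̲) → W(n,n;t̲) the odd linear map T_H(a) = Σ_{i=1}^{2n} (−1)^{μ(i)p(a)} ∂_i(a) ∂_{i'}. Then for all homogeneous a, b ∈ O(n,n;t̲): [T_H(a), T_H(b)] = T_H(T_H(a)(b)). In particular, the image HO(n,n;t̲) = T_H(O(n,n;t̲)) is a Lie subsuperalgebra of W(n,n;t̲). -/

import Mathlib

open scoped BigOperators Classical

/-! A concrete model of the truncated divided power superalgebra
`O(n,n;t̲)` over a field `F` of characteristic `p > 3`, of the generalized Witt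
superalgebra `W(n,n;t̲)` and of the odd Hamiltonian map `T_H`.  A basis element of
`O(n,n;t̲)` is `x^(α) x^u` with `α i ≤ p^(t i) − 1` and `u ⊆ {n+1,…,2n}` (odd
indices are represented by `Fin n`, with `k : Fin n` standing for `x_{n+k}`);
an element of `O(n,n;t̲)` is its family of coefficients. -/

section OddHam

variable (p n : ℕ) (t : Fin n → ℕ) (F : Type*) [Field F]

/-- Index set for the monomial basis `x^(α) x^u` of `O(n,n;t̲)`. -/
abbrev Idx := ((i : Fin n) → Fin (p ^ t i)) × Finset (Fin n)

/-- The truncated divided power superalgebra `O(n,n;t̲)`, as coefficient families. -/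
abbrev O := Idx p n t → F

/-- Multiplication of `O(n,n;t̲)`:  `x^(α) x^(β) = (∏ᵢ C(αᵢ+βᵢ, αᵢ)) x^(α+β)`
(truncated), and the exterior variables anticommute. -/
noncomputable def omul (f g : O p n t F) : O p n t F := fun x =>
  ∑ y : Idx p n t, ∑ z : Idx p n t,
    if (∀ i, (y.1 i : ℕ) + (z.1 i : ℕ) = (x.1 i : ℕ)) ∧ Disjoint y.2 z.2 ∧ y.2 ∪ z.2 = x.2
    then f y * g z * (∏ i, (((x.1 i : ℕ).choose (y.1 i : ℕ) : ℕ) : F)) *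
      (-1 : F) ^ (∑ a ∈ y.2, ((z.2.filter fun b => b < a).card))
    else 0

/-- The even superderivation `∂_i`, `i ∈ Y_0`:  `∂_i (x^(α)) = x^(α − ε_i)`. -/
noncomputable def dEven (i : Fin n) (f : O p n t F) : O p n t F := fun x =>
  if h : (x.1 i : ℕ) + 1 < p ^ t i
  then f (Function.update x.1 i ⟨(x.1 i : ℕ) + 1, h⟩, x.2)
  else 0

/-- The odd superderivation `∂_{n+k}`, `k ∈ Y_1`. -/
noncomputable def dOdd (k : Fin n) (f : O p n t F) : O p n t F := fun x =>
  if k ∈ x.2 then 0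
  else (-1 : F) ^ ((x.2.filter fun b => b < k).card) * f (x.1, insert k x.2)

/-- The generalized Witt superalgebra `W(n,n;t̲)`: an element `Σ_r f_r ∂_r` is
recorded as the family of its coefficients, `Sum.inl i ↦` coefficient of the even
`∂_i` and `Sum.inr k ↦` coefficient of the odd `∂_{n+k}`. -/
abbrev W := (Fin n ⊕ Fin n) → O p n t F

/-- The superderivation `∂_r` for `r ∈ Y = Y_0 ∪ Y_1`. -/
noncomputable def dd (r : Fin n ⊕ Fin n) : O p n t F → O p n t F :=
  Sum.elim (dEven p n t F) (dOdd p n t F) r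

/-- The action of `X = Σ_r X_r ∂_r ∈ W(n,n;t̲)` on `O(n,n;t̲)`. -/
noncomputable def act (X : W p n t F) (b : O p n t F) : O p n t F :=
  ∑ r : Fin n ⊕ Fin n, omul p n t F (X r) (dd p n t F r b)

/-- `a` is `ℤ₂`-homogeneous of parity `pa`. -/
def Homog (pa : ℕ) (a : O p n t F) : Prop :=
  ∀ x, a x ≠ 0 → x.2.card % 2 = pa % 2

/-- The odd Hamiltonian map `T_H (a) = Σ_{i=1}^{2n} (−1)^{μ(i) p(a)} ∂_i(a) ∂_{i'}`,
for `a` homogeneous of parity `pa`. -/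
noncomputable def TH (pa : ℕ) (a : O p n t F) : W p n t F :=
  Sum.elim (fun i => ((-1 : F) ^ pa) • dOdd p n t F i a) (fun k => dEven p n t F k a)

/-- The superbracket of `W(n,n;t̲)` on homogeneous elements `X, Y` of parities
`px, py`:  `[X,Y] = Σ_s (Σ_r X_r ∂_r(Y_s)) ∂_s − (−1)^{px·py} Σ_s (Σ_r Y_r ∂_r(X_s)) ∂_s`. -/
noncomputable def brkH (px py : ℕ) (X Y : W p n t F) : W p n t F := fun s =>
  act p n t F X (Y s) - ((-1 : F) ^ (px * py)) • act p n t F Y (X s)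

/-- The divided power monomial `x^(q ε_i)`. -/
noncomputable def epow (i : Fin n) (q : ℕ) : O p n t F := fun x =>
  if (∀ j, (x.1 j : ℕ) = if j = i then q else 0) ∧ x.2 = ∅ then 1 else 0

/-- The even variable `x_i`, `i ∈ Y_0`. -/
noncomputable def evar (i : Fin n) : O p n t F := epow p n t F i 1

/-- The odd variable `x_{n+k}`, `k ∈ Y_1`. -/
noncomputable def ovar (k : Fin n) : O p n t F := fun x =>
  if (∀ j, (x.1 j : ℕ) = 0) ∧ x.2 = {k} then 1 else 0

/-- `Δ_i = T_H(x_i x_{i'}) = x_{i'} ∂_{i'} − x_i ∂_i`. -/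
noncomputable def Delta (i : Fin n) : W p n t F :=
  TH p n t F 1 (omul p n t F (evar p n t F i) (ovar p n t F i))

end OddHam

namespace Stmt9Aux

open Finset

variable {p n : ℕ} {t : Fin n → ℕ} {F : Type*} [Field F]

lemma neg_one_pow_mod_two {m k : ℕ} (h : m % 2 = k % 2) : ((-1:F))^m = (-1)^k := by
  conv_lhs => rw [← Nat.div_add_mod m 2]
  conv_rhs => rw [← Nat.div_add_mod k 2]
  rw [pow_add, pow_add, pow_mul, pow_mul, h]
  norm_num

/-- count of elements of `s` below `a` -/
noncomputable def cnt (s : Finset (Fin n)) (a : Fin n) : ℕ := (s.filter (· < a)).card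

/-- the sign exponent in `omul` -/
noncomputable def E (u v : Finset (Fin n)) : ℕ := ∑ a ∈ u, cnt v a

lemma cnt_insert {k : Fin n} {v : Finset (Fin n)} (hk : k ∉ v) (a : Fin n) :
    cnt (insert k v) a = cnt v a + if k < a then 1 else 0 := by
  unfold cnt
  rw [filter_insert]
  split
  · rw [card_insert_of_notMem (fun h => hk (mem_filter.mp h).1)]
  · simp

lemma cnt_union {u v : Finset (Fin n)} (h : Disjoint u v) (a : Fin n) :
    cnt (u ∪ v) a = cnt u a + cnt v a := by
  unfold cnt
  rw [filter_union, card_union_of_disjoint (h.mono (filter_subset _ _) (filter_subset _ _))]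

lemma cnt_erase {k : Fin n} {v : Finset (Fin n)} (hk : k ∈ v) (a : Fin n) :
    cnt v a = cnt (v.erase k) a + if k < a then 1 else 0 := by
  have h1 : v = insert k (v.erase k) := (insert_erase hk).symm
  conv_lhs => rw [h1]
  exact cnt_insert (notMem_erase _ _) a

lemma E_insert_left {k : Fin n} {u v : Finset (Fin n)} (hk : k ∉ u) :
    E (insert k u) v = cnt v k + E u v := by
  unfold E; rw [sum_insert hk]

lemma E_insert_right {k : Fin n} {u v : Finset (Fin n)} (hk : k ∉ v) :
    E u (insert k v) = E u v + (u.filter fun a => k < a).card := by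
  unfold E
  rw [card_filter, ← sum_add_distrib]
  exact sum_congr rfl fun a _ => cnt_insert hk a

lemma E_erase_right {k : Fin n} {u v : Finset (Fin n)} (hk : k ∈ v) :
    E u v = E u (v.erase k) + (u.filter fun a => k < a).card := by
  have h1 : v = insert k (v.erase k) := (insert_erase hk).symm
  conv_lhs => rw [h1]
  exact E_insert_right (notMem_erase _ _)

lemma filter_lt_add_filter_gt {k : Fin n} {u : Finset (Fin n)} (hk : k ∉ u) :
    (u.filter fun a => k < a).card + cnt u k = u.card := by
  unfold cnt
  have h1 : (u.filter (· < k)) = u.filter fun a => ¬ (k < a) := by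
    apply filter_congr
    intro a hau
    have hne : a ≠ k := fun h => hk (h ▸ hau)
    constructor
    · intro h; exact not_lt.mpr h.le
    · intro h; exact lt_of_le_of_ne (not_lt.mp h) hne
  rw [h1, card_filter_add_card_filter_not _]

lemma E_add_E_swap {u v : Finset (Fin n)} (h : Disjoint u v) :
    E u v + E v u = u.card * v.card := by
  unfold E cnt
  have h1 : ∀ a ∈ u, (v.filter (· < a)).card = ∑ b ∈ v, if b < a then 1 else 0 :=
    fun a _ => card_filter _ _
  have h2 : ∀ a ∈ v, (u.filter (· < a)).card = ∑ b ∈ u, if b < a then 1 else 0 :=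
    fun a _ => card_filter _ _
  rw [sum_congr rfl h1, sum_congr rfl h2, sum_comm (s := v)]
  rw [← sum_add_distrib]
  have h3 : ∀ a ∈ u, ((∑ b ∈ v, if b < a then 1 else 0) + ∑ b ∈ v, if a < b then 1 else 0)
      = v.card := by
    intro a ha
    rw [← sum_add_distrib]
    rw [Finset.sum_congr rfl (g := fun _ => 1) ?_, sum_const, smul_eq_mul, mul_one]
    intro b hb
    have hne : b ≠ a := fun hba => (Finset.disjoint_left.mp h ha) (hba ▸ hb)
    rcases lt_or_gt_of_ne hne with hlt | hgt
    · simp [hlt, not_lt.mpr hlt.le]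
    · simp [hgt, not_lt.mpr hgt.le]
  rw [sum_congr rfl h3, sum_const, smul_eq_mul]


/-- cyclic shift on `Fin m` -/
def rotE (m : ℕ) : Fin m ≃ Fin m where
  toFun v := ⟨if v.val + 1 = m then 0 else v.val + 1, by have := v.2; split <;> omega⟩
  invFun v := ⟨if v.val = 0 then m - 1 else v.val - 1, by have := v.2; split <;> omega⟩
  left_inv v := by
    have hv := v.2
    apply Fin.ext
    show (if (if (v.val+1 = m) then 0 else v.val+1) = 0 then m - 1 else (if (v.val+1 = m) then 0 else v.val+1) - 1) = v.val
    by_cases h : v.val + 1 = m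
    · simp [h] <;> omega
    · simp [h] <;> omega
  right_inv v := by
    have hv := v.2
    apply Fin.ext
    show (if (if (v.val = 0) then m-1 else v.val-1) + 1 = m then 0 else (if (v.val = 0) then m-1 else v.val-1)+1) = v.val
    rcases Nat.eq_zero_or_pos v.val with h | h
    · have h2 : m - 1 + 1 = m := by omega
      simp [h, h2]
    · have h2 : ¬ (v.val = 0) := by omega
      have h3 : v.val - 1 + 1 = v.val := by omega
      have h4 : ¬ (v.val = m) := by omega
      simp [h2, h3, h4]
lemma rotE_val {m : ℕ} (v : Fin m) :
    ((rotE m v : Fin m) : ℕ) = if v.val + 1 = m then 0 else v.val + 1 := by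
  simp [rotE]
lemma rotE_symm_val {m : ℕ} (v : Fin m) :
    (((rotE m).symm v : Fin m) : ℕ) = if v.val = 0 then m - 1 else v.val - 1 := by
  simp [rotE]

/-- shift coordinate `i` -/
noncomputable def shiftE (p : ℕ) {n : ℕ} (t : Fin n → ℕ) (i : Fin n) :
    Idx p n t ≃ Idx p n t where
  toFun x := (Function.update x.1 i (rotE _ (x.1 i)), x.2)
  invFun x := (Function.update x.1 i ((rotE _).symm (x.1 i)), x.2)
  left_inv x := by
    refine Prod.ext ?_ rfl
    simp only [Function.update_self]
    funext j
    rcases eq_or_ne j i with rfl | hj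
    · simp
    · simp [Function.update_of_ne hj]
  right_inv x := by
    refine Prod.ext ?_ rfl
    simp only [Function.update_self]
    funext j
    rcases eq_or_ne j i with rfl | hj
    · simp
    · simp [Function.update_of_ne hj]

lemma shiftE_symm_fst_apply {i j : Fin n} (x : Idx p n t) :
    (((shiftE p t i).symm x).1 j : ℕ) =
      if j = i then (if (x.1 i : ℕ) = 0 then p ^ t i - 1 else (x.1 i : ℕ) - 1)
      else (x.1 j : ℕ) := by
  rcases eq_or_ne j i with rfl | hj
  · simp [shiftE, rotE_symm_val]
  · simp [shiftE, Function.update_of_ne hj, hj]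

lemma shiftE_symm_snd (i : Fin n) (x : Idx p n t) : ((shiftE p t i).symm x).2 = x.2 := rfl

/-- toggle membership of `k` in the odd part -/
noncomputable def toggE (p : ℕ) {n : ℕ} (t : Fin n → ℕ) (k : Fin n) :
    Idx p n t ≃ Idx p n t where
  toFun x := (x.1, if k ∈ x.2 then x.2.erase k else insert k x.2)
  invFun x := (x.1, if k ∈ x.2 then x.2.erase k else insert k x.2)
  left_inv x := by
    refine Prod.ext rfl ?_
    simp only
    by_cases h : k ∈ x.2
    · simp [h, notMem_erase, insert_erase h]
    · simp [h, mem_insert_self, erase_insert h]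
  right_inv x := by
    refine Prod.ext rfl ?_
    simp only
    by_cases h : k ∈ x.2
    · simp [h, notMem_erase, insert_erase h]
    · simp [h, mem_insert_self, erase_insert h]

lemma toggE_fst (k : Fin n) (x : Idx p n t) : ((toggE p t k) x).1 = x.1 := rfl

lemma toggE_snd (k : Fin n) (x : Idx p n t) :
    ((toggE p t k) x).2 = if k ∈ x.2 then x.2.erase k else insert k x.2 := rfl

/-! ### Linearity lemmas -/

lemma omul_smul_left (c : F) (f g : O p n t F) :
    omul p n t F (c • f) g = c • omul p n t F f g := by
  funext x
  simp only [omul, Pi.smul_apply, smul_eq_mul, Finset.mul_sum]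
  refine Finset.sum_congr rfl fun y _ => Finset.sum_congr rfl fun z _ => ?_
  split <;> ring

lemma omul_smul_right (c : F) (f g : O p n t F) :
    omul p n t F f (c • g) = c • omul p n t F f g := by
  funext x
  simp only [omul, Pi.smul_apply, smul_eq_mul, Finset.mul_sum]
  refine Finset.sum_congr rfl fun y _ => Finset.sum_congr rfl fun z _ => ?_
  split <;> ring

lemma dEven_smul (i : Fin n) (c : F) (f : O p n t F) :
    dEven p n t F i (c • f) = c • dEven p n t F i f := by
  funext x
  simp only [dEven, Pi.smul_apply, smul_eq_mul]
  split <;> simp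

lemma dOdd_smul (k : Fin n) (c : F) (f : O p n t F) :
    dOdd p n t F k (c • f) = c • dOdd p n t F k f := by
  funext x
  simp only [dOdd, Pi.smul_apply, smul_eq_mul]
  split <;> ring_nf <;> simp [mul_comm]

lemma dEven_add (i : Fin n) (f g : O p n t F) :
    dEven p n t F i (f + g) = dEven p n t F i f + dEven p n t F i g := by
  funext x
  simp only [dEven, Pi.add_apply]
  split <;> simp

lemma dOdd_add (k : Fin n) (f g : O p n t F) :
    dOdd p n t F k (f + g) = dOdd p n t F k f + dOdd p n t F k g := by
  funext x
  simp only [dOdd, Pi.add_apply]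
  split <;> ring_nf <;> simp [mul_add]

lemma dEven_sum {ι : Type*} (s : Finset ι) (i : Fin n) (f : ι → O p n t F) :
    dEven p n t F i (∑ j ∈ s, f j) = ∑ j ∈ s, dEven p n t F i (f j) := by
  classical
  induction s using Finset.induction_on with
  | empty =>
    funext x; simp [dEven]
  | insert _ _ hnot ih =>
    rw [Finset.sum_insert hnot, dEven_add, ih, Finset.sum_insert hnot]

lemma dOdd_sum {ι : Type*} (s : Finset ι) (k : Fin n) (f : ι → O p n t F) :
    dOdd p n t F k (∑ j ∈ s, f j) = ∑ j ∈ s, dOdd p n t F k (f j) := by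
  classical
  induction s using Finset.induction_on with
  | empty =>
    funext x; simp [dOdd]
  | insert _ _ hnot ih =>
    rw [Finset.sum_insert hnot, dOdd_add, ih, Finset.sum_insert hnot]

/-! ### Commutation lemmas -/

lemma dEven_dEven (i j : Fin n) (f : O p n t F) :
    dEven p n t F i (dEven p n t F j f) = dEven p n t F j (dEven p n t F i f) := by
  rcases eq_or_ne i j with rfl | hij
  · rfl
  funext x
  have hji := hij.symm
  simp only [dEven, Function.update_of_ne hij, Function.update_of_ne hji]
  by_cases h1 : (x.1 i : ℕ) + 1 < p ^ t i <;> by_cases h2 : (x.1 j : ℕ) + 1 < p ^ t j <;>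
    simp [h1, h2, Function.update_of_ne hij, Function.update_of_ne hji,
      Function.update_comm hij]

lemma dEven_dOdd (i k : Fin n) (f : O p n t F) :
    dEven p n t F i (dOdd p n t F k f) = dOdd p n t F k (dEven p n t F i f) := by
  funext x
  simp only [dEven, dOdd]
  by_cases h1 : (x.1 i : ℕ) + 1 < p ^ t i <;> by_cases h2 : k ∈ x.2 <;>
    simp [h1, h2, mul_comm]


lemma cnt_def (s : Finset (Fin n)) (a : Fin n) :
    cnt s a = (s.filter fun b => b < a).card := rfl

lemma E_def (u v : Finset (Fin n)) :
    E u v = ∑ a ∈ u, ((v.filter fun b => b < a).card) := rfl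

lemma dOdd_apply (k : Fin n) (f : O p n t F) (x : Idx p n t) :
    dOdd p n t F k f x =
      if k ∈ x.2 then 0 else (-1 : F) ^ (cnt x.2 k) * f (x.1, insert k x.2) := rfl

lemma dOdd_dOdd (i k : Fin n) (f : O p n t F) :
    dOdd p n t F i (dOdd p n t F k f) = - dOdd p n t F k (dOdd p n t F i f) := by
  funext x
  simp only [dOdd_apply, Pi.neg_apply]
  rcases eq_or_ne i k with rfl | hik
  · by_cases h : i ∈ x.2 <;> simp [h]
  by_cases hi : i ∈ x.2
  · simp [hi, Finset.mem_insert, hik.symm]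
  by_cases hk : k ∈ x.2
  · simp [hk, Finset.mem_insert, hik]
  simp only [hi, hk, if_neg, Finset.mem_insert, hik, hik.symm, or_self, false_or,
    if_false, mul_ite, mul_zero]
  have hset : insert k (insert i x.2) = insert i (insert k x.2) := Finset.insert_comm _ _ _
  rw [hset]
  have e1 : cnt (insert i x.2) k = cnt x.2 k + if i < k then 1 else 0 := cnt_insert hi k
  have e2 : cnt (insert k x.2) i = cnt x.2 i + if k < i then 1 else 0 := cnt_insert hk i
  have hsign : (-1:F)^(cnt x.2 i) * (-1)^(cnt (insert i x.2) k)
      = -((-1:F)^(cnt x.2 k) * (-1)^(cnt (insert k x.2) i)) := by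
    rw [← pow_add, ← pow_add, e1, e2]
    have hmod : (cnt x.2 i + (cnt x.2 k + if i < k then 1 else 0)) % 2
        = ((cnt x.2 k + (cnt x.2 i + if k < i then 1 else 0)) + 1) % 2 := by
      rcases lt_or_gt_of_ne hik with h | h
      · simp [h, not_lt.mpr h.le]; omega
      · simp [h, not_lt.mpr h.le]; omega
    rw [neg_one_pow_mod_two hmod, pow_succ]
    ring
  linear_combination (f (x.1, insert i (insert k x.2))) * hsign

lemma Homog_dEven {pa : ℕ} {a : O p n t F} (ha : Homog p n t F pa a) (i : Fin n) :
    Homog p n t F pa (dEven p n t F i a) := by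
  intro x hx
  rw [dEven] at hx
  split at hx
  · rename_i h
    exact ha (Function.update x.1 i ⟨(x.1 i : ℕ) + 1, h⟩, x.2) hx
  · exact absurd rfl hx

lemma Homog_dOdd {pa : ℕ} {a : O p n t F} (ha : Homog p n t F pa a) (k : Fin n) :
    Homog p n t F (pa + 1) (dOdd p n t F k a) := by
  intro x hx
  rw [dOdd] at hx
  split at hx
  · exact absurd rfl hx
  · rename_i hk
    have hne : a (x.1, insert k x.2) ≠ 0 := by
      intro h0; apply hx; rw [h0, mul_zero]
    have := ha _ hne
    simp only [Finset.card_insert_of_notMem hk] at this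
    omega


lemma cond_symm {x y z : Idx p n t}
    (hc : (∀ i, (y.1 i : ℕ) + (z.1 i : ℕ) = (x.1 i : ℕ)) ∧ Disjoint y.2 z.2 ∧ y.2 ∪ z.2 = x.2) :
    (∀ i, (z.1 i : ℕ) + (y.1 i : ℕ) = (x.1 i : ℕ)) ∧ Disjoint z.2 y.2 ∧ z.2 ∪ y.2 = x.2 := by
  obtain ⟨h1, h2, h3⟩ := hc
  exact ⟨fun i => by rw [Nat.add_comm]; exact h1 i, h2.symm, by rw [Finset.union_comm]; exact h3⟩

lemma omul_comm {pf pg : ℕ} {f g : O p n t F} (hf : Homog p n t F pf f)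
    (hg : Homog p n t F pg g) :
    omul p n t F f g = ((-1:F)^(pf*pg)) • omul p n t F g f := by
  funext x
  rw [Pi.smul_apply, smul_eq_mul, omul, omul]
  have h1 : (∑ y : Idx p n t, ∑ z : Idx p n t,
      (if (∀ i, (y.1 i : ℕ) + (z.1 i : ℕ) = (x.1 i : ℕ)) ∧ Disjoint y.2 z.2 ∧ y.2 ∪ z.2 = x.2
      then g y * f z * (∏ i, (((x.1 i : ℕ).choose (y.1 i : ℕ) : ℕ) : F)) *
        (-1 : F) ^ (∑ a ∈ y.2, ((z.2.filter fun b => b < a).card))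
      else 0)) = ∑ y : Idx p n t, ∑ z : Idx p n t,
      (if (∀ i, (z.1 i : ℕ) + (y.1 i : ℕ) = (x.1 i : ℕ)) ∧ Disjoint z.2 y.2 ∧ z.2 ∪ y.2 = x.2
      then g z * f y * (∏ i, (((x.1 i : ℕ).choose (z.1 i : ℕ) : ℕ) : F)) *
        (-1 : F) ^ (∑ a ∈ z.2, ((y.2.filter fun b => b < a).card))
      else 0) := Finset.sum_comm
  rw [h1, Finset.mul_sum]
  refine Finset.sum_congr rfl fun y _ => ?_
  rw [Finset.mul_sum]
  refine Finset.sum_congr rfl fun z _ => ?_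
  simp only [← E_def]
  by_cases hc : (∀ i, (y.1 i : ℕ) + (z.1 i : ℕ) = (x.1 i : ℕ)) ∧ Disjoint y.2 z.2 ∧ y.2 ∪ z.2 = x.2
  · have hc' := cond_symm hc
    rw [if_pos hc, if_pos hc']
    by_cases hfy : f y = 0
    · rw [hfy]; ring
    by_cases hgz : g z = 0
    · rw [hgz]; ring
    have hcy := hf y hfy
    have hcz := hg z hgz
    have hch : (∏ i, (((x.1 i : ℕ).choose (z.1 i : ℕ) : ℕ) : F))
        = ∏ i, (((x.1 i : ℕ).choose (y.1 i : ℕ) : ℕ) : F) := by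
      refine Finset.prod_congr rfl fun i _ => ?_
      have h2 := hc.1 i
      have h3 : (z.1 i : ℕ) = (x.1 i : ℕ) - (y.1 i : ℕ) := by omega
      rw [h3, Nat.choose_symm (by omega)]
    have hEE := E_add_E_swap (u := y.2) (v := z.2) hc.2.1
    have hprod : (y.2.card * z.2.card) % 2 = (pf * pg) % 2 :=
      Nat.ModEq.mul hcy hcz
    have hsgn : (-1:F)^(E y.2 z.2) = (-1)^(pf*pg) * (-1)^(E z.2 y.2) := by
      rw [← pow_add]
      exact neg_one_pow_mod_two (by omega)
    rw [hch, hsgn]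
    ring
  · rw [if_neg hc, if_neg (fun hc' => hc (cond_symm hc')), mul_zero]


/-! ### Normal form for `omul` -/

/-- the compatibility condition in `omul` -/
def cond (x y z : Idx p n t) : Prop :=
  (∀ i, (y.1 i : ℕ) + (z.1 i : ℕ) = (x.1 i : ℕ)) ∧ Disjoint y.2 z.2 ∧ y.2 ∪ z.2 = x.2

/-- the binomial coefficient product -/
noncomputable def P (x y : Idx p n t) : F :=
  ∏ j, (((x.1 j : ℕ).choose (y.1 j : ℕ) : ℕ) : F)

/-- a single term of `omul` -/
noncomputable def trm (f g : O p n t F) (x y z : Idx p n t) : F :=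
  if cond x y z then f y * g z * P (F := F) x y * (-1 : F) ^ (E y.2 z.2) else 0

lemma omul_eq (f g : O p n t F) (x : Idx p n t) :
    omul p n t F f g x = ∑ y : Idx p n t, ∑ z : Idx p n t, trm f g x y z := by
  rw [omul]
  refine Finset.sum_congr rfl fun y _ => Finset.sum_congr rfl fun z _ => ?_
  by_cases hc : (∀ i, (y.1 i : ℕ) + (z.1 i : ℕ) = (x.1 i : ℕ)) ∧ Disjoint y.2 z.2 ∧ y.2 ∪ z.2 = x.2
  · rw [if_pos hc, trm, if_pos (show cond x y z from hc), P, E_def]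
  · rw [if_neg hc, trm, if_neg (show ¬ cond x y z from hc)]

lemma trm_left_zero {f g : O p n t F} {x y z : Idx p n t} (h : f y = 0) :
    trm f g x y z = 0 := by
  rw [trm]; split
  · rw [h]; ring
  · rfl

lemma trm_right_zero {f g : O p n t F} {x y z : Idx p n t} (h : g z = 0) :
    trm f g x y z = 0 := by
  rw [trm]; split
  · rw [h]; ring
  · rfl

lemma P_split (i : Fin n) (x y : Idx p n t) :
    P (F := F) x y = (((x.1 i : ℕ).choose (y.1 i : ℕ) : ℕ) : F) *
      ∏ j ∈ Finset.univ.erase i, (((x.1 j : ℕ).choose (y.1 j : ℕ) : ℕ) : F) :=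
  (Finset.mul_prod_erase Finset.univ _ (Finset.mem_univ i)).symm

/-! ### shift helpers -/

lemma upd_val (x : Idx p n t) (i : Fin n) (hx : (x.1 i : ℕ) + 1 < p ^ t i) (j : Fin n) :
    (((Function.update x.1 i ⟨(x.1 i : ℕ) + 1, hx⟩, x.2) : Idx p n t).1 j : ℕ)
      = if j = i then (x.1 i : ℕ) + 1 else (x.1 j : ℕ) := by
  rcases eq_or_ne j i with rfl | hj
  · simp
  · simp [Function.update_of_ne hj, hj]

lemma dEven_shiftE_symm_ne {i : Fin n} {Y : Idx p n t} (hY : (Y.1 i : ℕ) ≠ 0)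
    (f : O p n t F) :
    dEven p n t F i f ((shiftE p t i).symm Y) = f Y := by
  have hYi : (((shiftE p t i).symm Y).1 i : ℕ) = (Y.1 i : ℕ) - 1 := by
    rw [shiftE_symm_fst_apply]; simp [hY]
  have hlt : (Y.1 i : ℕ) < p ^ t i := (Y.1 i).2
  have hguard : (((shiftE p t i).symm Y).1 i : ℕ) + 1 < p ^ t i := by omega
  rw [dEven, dif_pos hguard]
  congr 1
  refine Prod.ext ?_ rfl
  funext j
  rcases eq_or_ne j i with rfl | hj
  · simp only [Function.update_self]
    apply Fin.ext
    show (((shiftE p t j).symm Y).1 j : ℕ) + 1 = (Y.1 j : ℕ)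
    omega
  · simp only [Function.update_of_ne hj]
    apply Fin.ext
    rw [shiftE_symm_fst_apply, if_neg hj]

lemma dEven_shiftE_symm_zero {i : Fin n} {Y : Idx p n t} (hY : (Y.1 i : ℕ) = 0)
    (hB : 1 < p ^ t i) (f : O p n t F) :
    dEven p n t F i f ((shiftE p t i).symm Y) = 0 := by
  have hYi : (((shiftE p t i).symm Y).1 i : ℕ) = p ^ t i - 1 := by
    rw [shiftE_symm_fst_apply]; simp [hY]
  rw [dEven, dif_neg (by omega)]

lemma cond_shift_left {i : Fin n} {x Y Z : Idx p n t} (hx : (x.1 i : ℕ) + 1 < p ^ t i)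
    (hY : (Y.1 i : ℕ) ≠ 0) :
    cond x ((shiftE p t i).symm Y) Z ↔
      cond (Function.update x.1 i ⟨(x.1 i : ℕ) + 1, hx⟩, x.2) Y Z := by
  unfold cond
  constructor
  · rintro ⟨h1, h2, h3⟩
    refine ⟨fun j => ?_, h2, h3⟩
    have hh := h1 j
    rw [shiftE_symm_fst_apply] at hh
    rw [upd_val]
    rcases eq_or_ne j i with rfl | hj
    · rw [if_pos rfl] at hh ⊢
      rw [if_neg hY] at hh
      omega
    · rw [if_neg hj] at hh ⊢
      exact hh
  · rintro ⟨h1, h2, h3⟩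
    refine ⟨fun j => ?_, h2, h3⟩
    have hh := h1 j
    rw [upd_val] at hh
    rw [shiftE_symm_fst_apply]
    rcases eq_or_ne j i with rfl | hj
    · rw [if_pos rfl] at hh ⊢
      rw [if_neg hY]
      omega
    · rw [if_neg hj] at hh ⊢
      exact hh

lemma cond_shift_right {i : Fin n} {x Y Z : Idx p n t} (hx : (x.1 i : ℕ) + 1 < p ^ t i)
    (hZ : (Z.1 i : ℕ) ≠ 0) :
    cond x Y ((shiftE p t i).symm Z) ↔
      cond (Function.update x.1 i ⟨(x.1 i : ℕ) + 1, hx⟩, x.2) Y Z := by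
  unfold cond
  constructor
  · rintro ⟨h1, h2, h3⟩
    refine ⟨fun j => ?_, h2, h3⟩
    have hh := h1 j
    rw [shiftE_symm_fst_apply] at hh
    rw [upd_val]
    rcases eq_or_ne j i with rfl | hj
    · rw [if_pos rfl] at hh ⊢
      rw [if_neg hZ] at hh
      omega
    · rw [if_neg hj] at hh ⊢
      exact hh
  · rintro ⟨h1, h2, h3⟩
    refine ⟨fun j => ?_, h2, h3⟩
    have hh := h1 j
    rw [upd_val] at hh
    rw [shiftE_symm_fst_apply]
    rcases eq_or_ne j i with rfl | hj
    · rw [if_pos rfl] at hh ⊢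
      rw [if_neg hZ]
      omega
    · rw [if_neg hj] at hh ⊢
      exact hh

lemma cond_shift_lr {i : Fin n} {x Y Z : Idx p n t} (hY : (Y.1 i : ℕ) ≠ 0)
    (hZ : (Z.1 i : ℕ) ≠ 0) :
    cond x ((shiftE p t i).symm Y) Z ↔ cond x Y ((shiftE p t i).symm Z) := by
  unfold cond
  constructor
  · rintro ⟨h1, h2, h3⟩
    refine ⟨fun j => ?_, h2, h3⟩
    have hh := h1 j
    rw [shiftE_symm_fst_apply] at hh
    rw [shiftE_symm_fst_apply]
    rcases eq_or_ne j i with rfl | hj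
    · rw [if_pos rfl] at hh ⊢
      rw [if_neg hY] at hh
      rw [if_neg hZ]
      omega
    · rw [if_neg hj] at hh ⊢
      exact hh
  · rintro ⟨h1, h2, h3⟩
    refine ⟨fun j => ?_, h2, h3⟩
    have hh := h1 j
    rw [shiftE_symm_fst_apply] at hh
    rw [shiftE_symm_fst_apply]
    rcases eq_or_ne j i with rfl | hj
    · rw [if_pos rfl] at hh ⊢
      rw [if_neg hZ] at hh
      rw [if_neg hY]
      omega
    · rw [if_neg hj] at hh ⊢
      exact hh


lemma key_even_pos (i : Fin n) {x : Idx p n t} (hx : (x.1 i : ℕ) + 1 < p ^ t i)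
    (f g : O p n t F) (Y Z : Idx p n t) :
    trm f g ((Function.update x.1 i ⟨(x.1 i : ℕ) + 1, hx⟩, x.2) : Idx p n t) Y Z
      = trm (dEven p n t F i f) g x ((shiftE p t i).symm Y) Z
        + trm f (dEven p n t F i g) x Y ((shiftE p t i).symm Z) := by
  have hYlt : (Y.1 i : ℕ) < p ^ t i := (Y.1 i).2
  have hZlt : (Z.1 i : ℕ) < p ^ t i := (Z.1 i).2
  have hxlt : (x.1 i : ℕ) < p ^ t i := (x.1 i).2
  have hB : 1 < p ^ t i := by omega
  by_cases hY0 : (Y.1 i : ℕ) = 0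
  · rw [trm_left_zero (dEven_shiftE_symm_zero hY0 hB f), zero_add]
    by_cases hZ0 : (Z.1 i : ℕ) = 0
    · have hc1 : ¬ cond ((Function.update x.1 i ⟨(x.1 i : ℕ) + 1, hx⟩, x.2) : Idx p n t) Y Z := by
        rintro ⟨h1, _, _⟩
        have hh := h1 i
        rw [upd_val, if_pos rfl] at hh
        omega
      have hc2 : ¬ cond x Y ((shiftE p t i).symm Z) := by
        rintro ⟨h1, _, _⟩
        have hh := h1 i
        rw [shiftE_symm_fst_apply, if_pos rfl, if_pos hZ0] at hh
        omega
      rw [trm, if_neg hc1, trm, if_neg hc2]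
    · have hg : dEven p n t F i g ((shiftE p t i).symm Z) = g Z := dEven_shiftE_symm_ne hZ0 g
      have hcc := cond_shift_right (x := x) (Y := Y) hx hZ0
      by_cases hc : cond ((Function.update x.1 i ⟨(x.1 i : ℕ) + 1, hx⟩, x.2) : Idx p n t) Y Z
      · rw [trm, if_pos hc, trm, if_pos (hcc.mpr hc), hg, shiftE_symm_snd]
        have hP : P (F := F) ((Function.update x.1 i ⟨(x.1 i : ℕ) + 1, hx⟩, x.2) : Idx p n t) Y
            = P (F := F) x Y := by
          unfold P
          refine Finset.prod_congr rfl fun j _ => ?_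
          rw [upd_val]
          rcases eq_or_ne j i with rfl | hj
          · rw [if_pos rfl, hY0, Nat.choose_zero_right, Nat.choose_zero_right]
          · rw [if_neg hj]
        rw [hP]
      · rw [trm, if_neg hc, trm, if_neg (fun h => hc (hcc.mp h))]
  · have hf : dEven p n t F i f ((shiftE p t i).symm Y) = f Y := dEven_shiftE_symm_ne hY0 f
    by_cases hZ0 : (Z.1 i : ℕ) = 0
    · rw [trm_right_zero (dEven_shiftE_symm_zero hZ0 hB g), add_zero]
      have hcc := cond_shift_left (x := x) (Z := Z) hx hY0
      by_cases hc : cond ((Function.update x.1 i ⟨(x.1 i : ℕ) + 1, hx⟩, x.2) : Idx p n t) Y Z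
      · rw [trm, if_pos hc, trm, if_pos (hcc.mpr hc), hf, shiftE_symm_snd]
        have hYx : (Y.1 i : ℕ) = (x.1 i : ℕ) + 1 := by
          have hh := hc.1 i
          rw [upd_val, if_pos rfl] at hh
          omega
        have hP : P (F := F) ((Function.update x.1 i ⟨(x.1 i : ℕ) + 1, hx⟩, x.2) : Idx p n t) Y
            = P (F := F) x ((shiftE p t i).symm Y) := by
          unfold P
          refine Finset.prod_congr rfl fun j _ => ?_
          rw [upd_val]
          rcases eq_or_ne j i with rfl | hj
          · rw [if_pos rfl, shiftE_symm_fst_apply, if_pos rfl, if_neg hY0, hYx]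
            rw [Nat.choose_self]
            have : (x.1 j : ℕ) + 1 - 1 = (x.1 j : ℕ) := by omega
            rw [this, Nat.choose_self]
          · rw [if_neg hj, shiftE_symm_fst_apply, if_neg hj]
        rw [hP]
      · rw [trm, if_neg hc, trm, if_neg (fun h => hc (hcc.mp h))]
    · have hg : dEven p n t F i g ((shiftE p t i).symm Z) = g Z := dEven_shiftE_symm_ne hZ0 g
      have hcl := cond_shift_left (x := x) (Z := Z) hx hY0
      have hcr := cond_shift_right (x := x) (Y := Y) hx hZ0
      by_cases hc : cond ((Function.update x.1 i ⟨(x.1 i : ℕ) + 1, hx⟩, x.2) : Idx p n t) Y Z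
      · rw [trm, if_pos hc, trm, if_pos (hcl.mpr hc), trm, if_pos (hcr.mpr hc), hf, hg,
          shiftE_symm_snd, shiftE_symm_snd]
        have hP : P (F := F) ((Function.update x.1 i ⟨(x.1 i : ℕ) + 1, hx⟩, x.2) : Idx p n t) Y
            = P (F := F) x ((shiftE p t i).symm Y) + P (F := F) x Y := by
          rw [P_split i, P_split i, P_split i]
          have hR1 : (∏ j ∈ Finset.univ.erase i,
              ((((((Function.update x.1 i ⟨(x.1 i : ℕ) + 1, hx⟩, x.2) : Idx p n t).1 j : ℕ)).choose
                (Y.1 j : ℕ) : ℕ) : F))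
              = ∏ j ∈ Finset.univ.erase i, ((((x.1 j : ℕ)).choose (Y.1 j : ℕ) : ℕ) : F) := by
            refine Finset.prod_congr rfl fun j hj => ?_
            rw [upd_val, if_neg (Finset.mem_erase.mp hj).1]
          have hR2 : (∏ j ∈ Finset.univ.erase i,
              ((((x.1 j : ℕ)).choose (((shiftE p t i).symm Y).1 j : ℕ) : ℕ) : F))
              = ∏ j ∈ Finset.univ.erase i, ((((x.1 j : ℕ)).choose (Y.1 j : ℕ) : ℕ) : F) := by
            refine Finset.prod_congr rfl fun j hj => ?_
            rw [shiftE_symm_fst_apply, if_neg (Finset.mem_erase.mp hj).1]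
          rw [hR1, hR2]
          have hv1 : ((((Function.update x.1 i ⟨(x.1 i : ℕ) + 1, hx⟩, x.2) : Idx p n t).1 i : ℕ))
              = (x.1 i : ℕ) + 1 := by rw [upd_val, if_pos rfl]
          have hv2 : ((((shiftE p t i).symm Y).1 i : ℕ)) = (Y.1 i : ℕ) - 1 := by
            rw [shiftE_symm_fst_apply, if_pos rfl, if_neg hY0]
          rw [hv1, hv2]
          have hpascal : ((x.1 i : ℕ) + 1).choose (Y.1 i : ℕ)
              = (x.1 i : ℕ).choose ((Y.1 i : ℕ) - 1) + (x.1 i : ℕ).choose (Y.1 i : ℕ) := by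
            have hp2 := Nat.choose_succ_succ (x.1 i : ℕ) ((Y.1 i : ℕ) - 1)
            simp only [Nat.succ_eq_add_one] at hp2
            have h2 : ((Y.1 i : ℕ) - 1) + 1 = (Y.1 i : ℕ) := by omega
            rw [h2] at hp2
            exact hp2
          rw [hpascal]
          push_cast
          ring
        rw [hP]
        ring
      · rw [trm, if_neg hc, trm, if_neg (fun h => hc (hcl.mp h)), trm,
          if_neg (fun h => hc (hcr.mp h)), add_zero]

lemma key_even_top (hp : p.Prime) [CharP F p] (i : Fin n) (hti : 1 ≤ t i)
    {x : Idx p n t} (hx : ¬ ((x.1 i : ℕ) + 1 < p ^ t i))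
    (f g : O p n t F) (Y Z : Idx p n t) :
    (0 : F) = trm (dEven p n t F i f) g x ((shiftE p t i).symm Y) Z
        + trm f (dEven p n t F i g) x Y ((shiftE p t i).symm Z) := by
  have hYlt : (Y.1 i : ℕ) < p ^ t i := (Y.1 i).2
  have hZlt : (Z.1 i : ℕ) < p ^ t i := (Z.1 i).2
  have hxlt : (x.1 i : ℕ) < p ^ t i := (x.1 i).2
  have hB : 1 < p ^ t i := Nat.one_lt_pow (by omega) hp.one_lt
  have hxi : (x.1 i : ℕ) = p ^ t i - 1 := by omega
  by_cases hY0 : (Y.1 i : ℕ) = 0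
  · rw [trm_left_zero (dEven_shiftE_symm_zero hY0 hB f), zero_add]
    by_cases hZ0 : (Z.1 i : ℕ) = 0
    · rw [trm_right_zero (dEven_shiftE_symm_zero hZ0 hB g)]
    · have hc2 : ¬ cond x Y ((shiftE p t i).symm Z) := by
        rintro ⟨h1, _, _⟩
        have hh := h1 i
        rw [shiftE_symm_fst_apply, if_pos rfl, if_neg hZ0] at hh
        omega
      rw [trm, if_neg hc2]
  · by_cases hZ0 : (Z.1 i : ℕ) = 0
    · rw [trm_right_zero (dEven_shiftE_symm_zero hZ0 hB g), add_zero]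
      have hc1 : ¬ cond x ((shiftE p t i).symm Y) Z := by
        rintro ⟨h1, _, _⟩
        have hh := h1 i
        rw [shiftE_symm_fst_apply, if_pos rfl, if_neg hY0] at hh
        omega
      rw [trm, if_neg hc1]
    · have hf : dEven p n t F i f ((shiftE p t i).symm Y) = f Y := dEven_shiftE_symm_ne hY0 f
      have hg : dEven p n t F i g ((shiftE p t i).symm Z) = g Z := dEven_shiftE_symm_ne hZ0 g
      have hcc := cond_shift_lr (x := x) hY0 hZ0
      by_cases hc : cond x ((shiftE p t i).symm Y) Z
      · rw [trm, if_pos hc, trm, if_pos (hcc.mp hc), hf, hg, shiftE_symm_snd, shiftE_symm_snd]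
        have hYBi : (Y.1 i : ℕ) ≠ p ^ t i := by omega
        have hsum : P (F := F) x ((shiftE p t i).symm Y) + P (F := F) x Y = 0 := by
          rw [P_split i, P_split i]
          have hR2 : (∏ j ∈ Finset.univ.erase i,
              ((((x.1 j : ℕ)).choose (((shiftE p t i).symm Y).1 j : ℕ) : ℕ) : F))
              = ∏ j ∈ Finset.univ.erase i, ((((x.1 j : ℕ)).choose (Y.1 j : ℕ) : ℕ) : F) := by
            refine Finset.prod_congr rfl fun j hj => ?_
            rw [shiftE_symm_fst_apply, if_neg (Finset.mem_erase.mp hj).1]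
          rw [hR2]
          have hv2 : ((((shiftE p t i).symm Y).1 i : ℕ)) = (Y.1 i : ℕ) - 1 := by
            rw [shiftE_symm_fst_apply, if_pos rfl, if_neg hY0]
          rw [hv2, ← add_mul]
          have hchoose : ((x.1 i : ℕ).choose ((Y.1 i : ℕ) - 1) : F)
              + ((x.1 i : ℕ).choose (Y.1 i : ℕ) : F) = 0 := by
            have hpascal : (p ^ t i).choose (Y.1 i : ℕ)
                = (x.1 i : ℕ).choose ((Y.1 i : ℕ) - 1) + (x.1 i : ℕ).choose (Y.1 i : ℕ) := by
              have hp2 := Nat.choose_succ_succ (x.1 i : ℕ) ((Y.1 i : ℕ) - 1)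
              simp only [Nat.succ_eq_add_one] at hp2
              have h2 : ((Y.1 i : ℕ) - 1) + 1 = (Y.1 i : ℕ) := by omega
              rw [h2] at hp2
              have h1 : p ^ t i = (x.1 i : ℕ) + 1 := by omega
              have h3 : (p ^ t i).choose (Y.1 i : ℕ) = ((x.1 i : ℕ) + 1).choose (Y.1 i : ℕ) :=
                congrArg (fun m => Nat.choose m (Y.1 i : ℕ)) h1
              rw [h3]
              exact hp2
            have hdvd : p ∣ (p ^ t i).choose (Y.1 i : ℕ) :=
              hp.dvd_choose_pow hY0 hYBi
            have hz : (((p ^ t i).choose (Y.1 i : ℕ) : ℕ) : F) = 0 :=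
              (CharP.cast_eq_zero_iff F p _).mpr hdvd
            rw [hpascal] at hz
            push_cast at hz
            exact hz
          rw [hchoose, zero_mul]
        linear_combination (- (f Y * g Z * (-1:F) ^ (E Y.2 Z.2))) * hsum
      · rw [trm, if_neg hc, trm, if_neg (fun h => hc (hcc.mpr h)), add_zero]

lemma dEven_omul (hp : p.Prime) [CharP F p] (ht : ∀ j, 1 ≤ t j) (i : Fin n)
    (f g : O p n t F) :
    dEven p n t F i (omul p n t F f g) =
      omul p n t F (dEven p n t F i f) g + omul p n t F f (dEven p n t F i g) := by
  funext x
  rw [Pi.add_apply]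
  have hre1 : omul p n t F (dEven p n t F i f) g x
      = ∑ Y : Idx p n t, ∑ Z : Idx p n t,
          trm (dEven p n t F i f) g x ((shiftE p t i).symm Y) Z := by
    rw [omul_eq]
    exact (Equiv.sum_comp (shiftE p t i).symm
      (fun y => ∑ z : Idx p n t, trm (dEven p n t F i f) g x y z)).symm
  have hre2 : omul p n t F f (dEven p n t F i g) x
      = ∑ Y : Idx p n t, ∑ Z : Idx p n t,
          trm f (dEven p n t F i g) x Y ((shiftE p t i).symm Z) := by
    rw [omul_eq]
    refine Finset.sum_congr rfl fun Y _ => ?_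
    exact (Equiv.sum_comp (shiftE p t i).symm
      (fun z => trm f (dEven p n t F i g) x Y z)).symm
  rw [hre1, hre2, ← Finset.sum_add_distrib]
  rw [dEven]
  split
  · rename_i hx
    rw [omul_eq]
    refine Finset.sum_congr rfl fun Y _ => ?_
    rw [← Finset.sum_add_distrib]
    exact Finset.sum_congr rfl fun Z _ => key_even_pos i hx f g Y Z
  · rename_i hx
    symm
    refine Finset.sum_eq_zero fun Y _ => ?_
    rw [← Finset.sum_add_distrib]
    exact Finset.sum_eq_zero fun Z _ => (key_even_top hp i (ht i) hx f g Y Z).symm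


lemma dOdd_togg_mem {k : Fin n} {Y : Idx p n t} (hkY : k ∈ Y.2) (f : O p n t F) :
    dOdd p n t F k f (toggE p t k Y) = (-1:F)^(cnt (Y.2.erase k) k) * f Y := by
  have h2 : (toggE p t k Y).2 = Y.2.erase k := by rw [toggE_snd, if_pos hkY]
  rw [dOdd_apply, toggE_fst, h2, if_neg (Finset.notMem_erase _ _), Finset.insert_erase hkY]

lemma dOdd_togg_not_mem {k : Fin n} {Y : Idx p n t} (hkY : k ∉ Y.2) (f : O p n t F) :
    dOdd p n t F k f (toggE p t k Y) = 0 := by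
  have h2 : (toggE p t k Y).2 = insert k Y.2 := by rw [toggE_snd, if_neg hkY]
  rw [dOdd_apply, h2, if_pos (Finset.mem_insert_self _ _)]

lemma cond_togg_left {k : Fin n} {x Y Z : Idx p n t} (hk : k ∉ x.2) (hkY : k ∈ Y.2)
    (hkZ : k ∉ Z.2) :
    cond x (toggE p t k Y) Z ↔ cond ((x.1, insert k x.2) : Idx p n t) Y Z := by
  have h2 : (toggE p t k Y).2 = Y.2.erase k := by rw [toggE_snd, if_pos hkY]
  unfold cond
  rw [toggE_fst, h2]
  constructor
  · rintro ⟨h1, hd, hu⟩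
    refine ⟨h1, ?_, ?_⟩
    · rw [← Finset.insert_erase hkY, Finset.disjoint_insert_left]
      exact ⟨hkZ, hd⟩
    · show Y.2 ∪ Z.2 = insert k x.2
      rw [← Finset.insert_erase hkY, Finset.insert_union, hu]
  · rintro ⟨h1, hd, hu⟩
    refine ⟨h1, hd.mono (Finset.erase_subset _ _) le_rfl, ?_⟩
    have hZe : Z.2.erase k = Z.2 := Finset.erase_eq_of_notMem hkZ
    show Y.2.erase k ∪ Z.2 = x.2
    rw [← hZe, ← Finset.erase_union_distrib, hu, Finset.erase_insert hk]

lemma cond_togg_right {k : Fin n} {x Y Z : Idx p n t} (hk : k ∉ x.2) (hkY : k ∉ Y.2)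
    (hkZ : k ∈ Z.2) :
    cond x Y (toggE p t k Z) ↔ cond ((x.1, insert k x.2) : Idx p n t) Y Z := by
  have h2 : (toggE p t k Z).2 = Z.2.erase k := by rw [toggE_snd, if_pos hkZ]
  unfold cond
  rw [toggE_fst, h2]
  constructor
  · rintro ⟨h1, hd, hu⟩
    refine ⟨h1, ?_, ?_⟩
    · rw [← Finset.insert_erase hkZ, Finset.disjoint_insert_right]
      exact ⟨hkY, hd⟩
    · show Y.2 ∪ Z.2 = insert k x.2
      rw [← Finset.insert_erase hkZ, Finset.union_insert, hu]
  · rintro ⟨h1, hd, hu⟩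
    refine ⟨h1, hd.mono le_rfl (Finset.erase_subset _ _), ?_⟩
    have hYe : Y.2.erase k = Y.2 := Finset.erase_eq_of_notMem hkY
    show Y.2 ∪ Z.2.erase k = x.2
    rw [← hYe, ← Finset.erase_union_distrib, hu, Finset.erase_insert hk]

lemma cond_togg_lr {k : Fin n} {x Y Z : Idx p n t} (hkx : k ∈ x.2) (hkY : k ∈ Y.2)
    (hkZ : k ∈ Z.2) :
    cond x (toggE p t k Y) Z ↔ cond x Y (toggE p t k Z) := by
  have h2Y : (toggE p t k Y).2 = Y.2.erase k := by rw [toggE_snd, if_pos hkY]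
  have h2Z : (toggE p t k Z).2 = Z.2.erase k := by rw [toggE_snd, if_pos hkZ]
  unfold cond
  rw [toggE_fst, toggE_fst, h2Y, h2Z]
  constructor
  · rintro ⟨h1, hd, hu⟩
    refine ⟨h1, ?_, ?_⟩
    · rw [Finset.disjoint_left]
      intro a haY haZ
      exact (Finset.disjoint_left.mp hd)
        (Finset.mem_erase.mpr ⟨(Finset.mem_erase.mp haZ).1, haY⟩) (Finset.mem_erase.mp haZ).2
    · ext a
      by_cases hak : a = k
      · subst hak
        simp [hkY, hkx]
      · have hh := Finset.ext_iff.mp hu a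
        simp only [Finset.mem_union, Finset.mem_erase, hak, ne_eq, not_false_iff,
          true_and] at hh ⊢
        tauto
  · rintro ⟨h1, hd, hu⟩
    refine ⟨h1, ?_, ?_⟩
    · rw [Finset.disjoint_left]
      intro a haY haZ
      have hak : a ≠ k := (Finset.mem_erase.mp haY).1
      exact (Finset.disjoint_left.mp hd) (Finset.mem_erase.mp haY).2
        (Finset.mem_erase.mpr ⟨hak, haZ⟩)
    · ext a
      by_cases hak : a = k
      · subst hak
        simp [hkZ, hkx]
      · have hh := Finset.ext_iff.mp hu a
        simp only [Finset.mem_union, Finset.mem_erase, hak, ne_eq, not_false_iff,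
          true_and] at hh ⊢
        tauto


lemma key_odd_pos {pf : ℕ} {f : O p n t F} (hf : Homog p n t F pf f) (k : Fin n)
    {x : Idx p n t} (hk : k ∉ x.2) (g : O p n t F) (Y Z : Idx p n t) :
    (-1:F)^(cnt x.2 k) * trm f g ((x.1, insert k x.2) : Idx p n t) Y Z
      = trm (dOdd p n t F k f) g x (toggE p t k Y) Z
        + (-1:F)^pf * trm f (dOdd p n t F k g) x Y (toggE p t k Z) := by
  by_cases hkY : k ∈ Y.2
  · by_cases hkZ : k ∈ Z.2
    · have hc0 : ¬ cond ((x.1, insert k x.2) : Idx p n t) Y Z := by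
        rintro ⟨_, hd, _⟩
        exact (Finset.disjoint_left.mp hd) hkY hkZ
      have hc1 : ¬ cond x (toggE p t k Y) Z := by
        rintro ⟨_, _, hu⟩
        apply hk
        rw [← hu]
        exact Finset.mem_union_right _ hkZ
      have hc2 : ¬ cond x Y (toggE p t k Z) := by
        rintro ⟨_, _, hu⟩
        apply hk
        rw [← hu]
        exact Finset.mem_union_left _ hkY
      rw [trm, if_neg hc0, trm, if_neg hc1, trm, if_neg hc2]
      ring
    · rw [trm_right_zero (dOdd_togg_not_mem hkZ g)]
      have hcc := cond_togg_left (x := x) (Y := Y) (Z := Z) hk hkY hkZ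
      by_cases hc : cond ((x.1, insert k x.2) : Idx p n t) Y Z
      · rw [trm, if_pos hc, trm, if_pos (hcc.mpr hc), dOdd_togg_mem hkY f]
        have h2 : (toggE p t k Y).2 = Y.2.erase k := by rw [toggE_snd, if_pos hkY]
        rw [h2]
        have hP1 : P (F := F) ((x.1, insert k x.2) : Idx p n t) Y = P (F := F) x Y := rfl
        have hP2 : P (F := F) x (toggE p t k Y) = P (F := F) x Y := rfl
        rw [hP1, hP2]
        have hc' := hcc.mpr hc
        have hd' : Disjoint (Y.2.erase k) Z.2 := by have := hc'.2.1; rwa [h2] at this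
        have hu' : Y.2.erase k ∪ Z.2 = x.2 := by have := hc'.2.2; rwa [h2] at this
        have hE : E Y.2 Z.2 = cnt Z.2 k + E (Y.2.erase k) Z.2 := by
          conv_lhs => rw [← Finset.insert_erase hkY]
          exact E_insert_left (Finset.notMem_erase _ _)
        have hcx : cnt x.2 k = cnt (Y.2.erase k) k + cnt Z.2 k := by
          rw [← hu']; exact cnt_union hd' k
        have hsgn : (-1:F)^(cnt x.2 k) * (-1:F)^(E Y.2 Z.2)
            = (-1:F)^(cnt (Y.2.erase k) k) * (-1:F)^(E (Y.2.erase k) Z.2) := by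
          rw [← pow_add, ← pow_add]
          exact neg_one_pow_mod_two (by omega)
        linear_combination (f Y * g Z * P (F := F) x Y) * hsgn
      · rw [trm, if_neg hc, trm, if_neg (fun h => hc (hcc.mp h))]
        ring
  · by_cases hkZ : k ∈ Z.2
    · rw [trm_left_zero (dOdd_togg_not_mem hkY f), zero_add]
      by_cases hf0 : f Y = 0
      · rw [trm_left_zero hf0, trm_left_zero hf0]
        ring
      have hcard := hf Y hf0
      have hcc := cond_togg_right (x := x) (Y := Y) (Z := Z) hk hkY hkZ
      by_cases hc : cond ((x.1, insert k x.2) : Idx p n t) Y Z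
      · rw [trm, if_pos hc, trm, if_pos (hcc.mpr hc), dOdd_togg_mem hkZ g]
        have h2 : (toggE p t k Z).2 = Z.2.erase k := by rw [toggE_snd, if_pos hkZ]
        rw [h2]
        have hP1 : P (F := F) ((x.1, insert k x.2) : Idx p n t) Y = P (F := F) x Y := rfl
        rw [hP1]
        have hc' := hcc.mpr hc
        have hd' : Disjoint Y.2 (Z.2.erase k) := by have := hc'.2.1; rwa [h2] at this
        have hu' : Y.2 ∪ Z.2.erase k = x.2 := by have := hc'.2.2; rwa [h2] at this
        have hE : E Y.2 Z.2 = E Y.2 (Z.2.erase k) + (Y.2.filter fun a => k < a).card := by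
          conv_lhs => rw [← Finset.insert_erase hkZ]
          exact E_insert_right (Finset.notMem_erase _ _)
        have hgt : (Y.2.filter fun a => k < a).card + cnt Y.2 k = Y.2.card :=
          filter_lt_add_filter_gt hkY
        have hcx : cnt x.2 k = cnt Y.2 k + cnt (Z.2.erase k) k := by
          rw [← hu']; exact cnt_union hd' k
        have hsgn : (-1:F)^(cnt x.2 k) * (-1:F)^(E Y.2 Z.2)
            = (-1:F)^pf * ((-1:F)^(cnt (Z.2.erase k) k) * (-1:F)^(E Y.2 (Z.2.erase k))) := by
          rw [← pow_add, ← pow_add, ← pow_add]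
          exact neg_one_pow_mod_two (by omega)
        linear_combination (f Y * g Z * P (F := F) x Y) * hsgn
      · rw [trm, if_neg hc, trm, if_neg (fun h => hc (hcc.mp h))]
        ring
    · have hc0 : ¬ cond ((x.1, insert k x.2) : Idx p n t) Y Z := by
        rintro ⟨_, _, hu⟩
        have hh : k ∈ Y.2 ∪ Z.2 := by rw [hu]; exact Finset.mem_insert_self _ _
        rcases Finset.mem_union.mp hh with h | h
        exacts [hkY h, hkZ h]
      rw [trm, if_neg hc0, trm_left_zero (dOdd_togg_not_mem hkY f),
        trm_right_zero (dOdd_togg_not_mem hkZ g)]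
      ring

lemma key_odd_top {pf : ℕ} {f : O p n t F} (hf : Homog p n t F pf f) (k : Fin n)
    {x : Idx p n t} (hk : k ∈ x.2) (g : O p n t F) (Y Z : Idx p n t) :
    (0:F) = trm (dOdd p n t F k f) g x (toggE p t k Y) Z
        + (-1:F)^pf * trm f (dOdd p n t F k g) x Y (toggE p t k Z) := by
  by_cases hkY : k ∈ Y.2
  · by_cases hkZ : k ∈ Z.2
    · have hcc := cond_togg_lr (x := x) hk hkY hkZ
      by_cases hc : cond x (toggE p t k Y) Z
      · by_cases hf0 : f Y = 0
        · rw [trm, if_pos hc, trm, if_pos (hcc.mp hc), dOdd_togg_mem hkY f,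
            dOdd_togg_mem hkZ g, hf0]
          ring
        · have hcard := hf Y hf0
          rw [trm, if_pos hc, trm, if_pos (hcc.mp hc), dOdd_togg_mem hkY f,
            dOdd_togg_mem hkZ g]
          have h2Y : (toggE p t k Y).2 = Y.2.erase k := by rw [toggE_snd, if_pos hkY]
          have h2Z : (toggE p t k Z).2 = Z.2.erase k := by rw [toggE_snd, if_pos hkZ]
          rw [h2Y, h2Z]
          have hP2 : P (F := F) x (toggE p t k Y) = P (F := F) x Y := rfl
          rw [hP2]
          have hku : k ∉ Y.2.erase k := Finset.notMem_erase _ _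
          have hkv : k ∉ Z.2.erase k := Finset.notMem_erase _ _
          have hE1 : E Y.2 (Z.2.erase k)
              = cnt (Z.2.erase k) k + E (Y.2.erase k) (Z.2.erase k) := by
            conv_lhs => rw [← Finset.insert_erase hkY]
            exact E_insert_left hku
          have hE2 : E (Y.2.erase k) Z.2
              = E (Y.2.erase k) (Z.2.erase k)
                + ((Y.2.erase k).filter fun a => k < a).card := by
            conv_lhs => rw [← Finset.insert_erase hkZ]
            exact E_insert_right hkv
          have hgt : ((Y.2.erase k).filter fun a => k < a).card + cnt (Y.2.erase k) k
              = (Y.2.erase k).card := filter_lt_add_filter_gt hku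
          have hcY : (Y.2.erase k).card + 1 = Y.2.card := Finset.card_erase_add_one hkY
          have hsgn : (-1:F)^(cnt (Y.2.erase k) k) * (-1:F)^(E (Y.2.erase k) Z.2)
              = - ((-1:F)^pf * ((-1:F)^(cnt (Z.2.erase k) k)
                * (-1:F)^(E Y.2 (Z.2.erase k)))) := by
            have hm : (cnt (Y.2.erase k) k + E (Y.2.erase k) Z.2) % 2
                = ((pf + (cnt (Z.2.erase k) k + E Y.2 (Z.2.erase k))) + 1) % 2 := by omega
            rw [← pow_add, ← pow_add, ← pow_add, neg_one_pow_mod_two hm, pow_succ]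
            ring
          linear_combination (- (f Y * g Z * P (F := F) x Y)) * hsgn
      · rw [trm, if_neg hc, trm, if_neg (fun h => hc (hcc.mpr h))]
        ring
    · have hc1 : ¬ cond x (toggE p t k Y) Z := by
        rintro ⟨_, _, hu⟩
        have h2 : (toggE p t k Y).2 = Y.2.erase k := by rw [toggE_snd, if_pos hkY]
        rw [h2] at hu
        have hh : k ∈ Y.2.erase k ∪ Z.2 := by rw [hu]; exact hk
        rcases Finset.mem_union.mp hh with h | h
        exacts [Finset.notMem_erase _ _ h, hkZ h]
      rw [trm, if_neg hc1, trm_right_zero (dOdd_togg_not_mem hkZ g)]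
      ring
  · by_cases hkZ : k ∈ Z.2
    · have hc2 : ¬ cond x Y (toggE p t k Z) := by
        rintro ⟨_, _, hu⟩
        have h2 : (toggE p t k Z).2 = Z.2.erase k := by rw [toggE_snd, if_pos hkZ]
        rw [h2] at hu
        have hh : k ∈ Y.2 ∪ Z.2.erase k := by rw [hu]; exact hk
        rcases Finset.mem_union.mp hh with h | h
        exacts [hkY h, Finset.notMem_erase _ _ h]
      rw [trm_left_zero (dOdd_togg_not_mem hkY f), trm, if_neg hc2]
      ring
    · rw [trm_left_zero (dOdd_togg_not_mem hkY f),
        trm_right_zero (dOdd_togg_not_mem hkZ g)]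
      ring

lemma dOdd_omul {pf : ℕ} {f : O p n t F} (hf : Homog p n t F pf f) (k : Fin n)
    (g : O p n t F) :
    dOdd p n t F k (omul p n t F f g)
      = omul p n t F (dOdd p n t F k f) g
        + ((-1:F)^pf) • omul p n t F f (dOdd p n t F k g) := by
  funext x
  rw [Pi.add_apply, Pi.smul_apply, smul_eq_mul]
  have hre1 : omul p n t F (dOdd p n t F k f) g x
      = ∑ Y : Idx p n t, ∑ Z : Idx p n t,
          trm (dOdd p n t F k f) g x (toggE p t k Y) Z := by
    rw [omul_eq]
    exact (Equiv.sum_comp (toggE p t k)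
      (fun y => ∑ z : Idx p n t, trm (dOdd p n t F k f) g x y z)).symm
  have hre2 : omul p n t F f (dOdd p n t F k g) x
      = ∑ Y : Idx p n t, ∑ Z : Idx p n t,
          trm f (dOdd p n t F k g) x Y (toggE p t k Z) := by
    rw [omul_eq]
    refine Finset.sum_congr rfl fun Y _ => ?_
    exact (Equiv.sum_comp (toggE p t k)
      (fun z => trm f (dOdd p n t F k g) x Y z)).symm
  rw [hre1, hre2, Finset.mul_sum, ← Finset.sum_add_distrib, dOdd_apply]
  split
  · rename_i hk
    symm
    refine Finset.sum_eq_zero fun Y _ => ?_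
    rw [Finset.mul_sum, ← Finset.sum_add_distrib]
    exact Finset.sum_eq_zero fun Z _ => (key_odd_top hf k hk g Y Z).symm
  · rename_i hk
    rw [omul_eq, Finset.mul_sum]
    refine Finset.sum_congr rfl fun Y _ => ?_
    rw [Finset.mul_sum, Finset.mul_sum, ← Finset.sum_add_distrib]
    exact Finset.sum_congr rfl fun Z _ => key_odd_pos hf k hk g Y Z


/-! ### scalar sign helpers -/

lemma neg_one_pow_eq_of_add_even {m k c : ℕ} (h : m + 2*c = k) : ((-1:F))^m = (-1)^k := by
  rw [← h, pow_add, pow_mul, neg_one_sq, one_pow, mul_one]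

lemma neg_one_sq_pow (m : ℕ) : ((-1:F))^m * (-1)^m = 1 := by
  rw [← pow_add]
  rw [← neg_one_pow_eq_of_add_even (show 0 + 2*m = m + m by ring), pow_zero]

lemma sgnA (pa pb : ℕ) : (-1:F)^pa * (-1:F)^((pa+1)*pb) = -((-1:F)^((pa+1)*(pb+1))) := by
  rw [← pow_add,
    neg_one_pow_eq_of_add_even (show pa + (pa+1)*pb + 2*1 = (pa+1)*(pb+1) + 1 by ring),
    pow_succ]
  ring

lemma sgnB (pa pb : ℕ) :
    (-1:F)^(pa*(pb+1)) = -((-1:F)^((pa+1)*(pb+1))) * (-1:F)^pb := by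
  rw [neg_one_pow_eq_of_add_even
    (show pa*(pb+1) + 2*(pb+1) = ((pa+1)*(pb+1) + 1) + pb by ring), pow_add, pow_succ]
  ring

lemma sgnD (pa pb : ℕ) :
    (-1:F)^(pa+pb+1) * (-((-1:F)^((pa+1+1)*(pb+1))))
      = -((-1:F)^((pa+1)*(pb+1))) * (-1:F)^pa := by
  have h1 : -((-1:F)^((pa+1+1)*(pb+1))) = (-1:F)^((pa+1+1)*(pb+1)+1) := by
    rw [pow_succ]; ring
  rw [h1, ← pow_add,
    ← neg_one_pow_eq_of_add_even
      (show (((pa+1)*(pb+1) + 1) + pa) + 2*(pb+1) = (pa+pb+1) + ((pa+1+1)*(pb+1)+1) by ring),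
    pow_add, pow_succ]
  ring

lemma sgnC (pa pb : ℕ) : (-1:F)^(pa+pb+1) * (-((-1:F)^pa)) = (-1:F)^pb := by
  have h1 : -((-1:F)^pa) = (-1:F)^(pa+1) := by rw [pow_succ]; ring
  rw [h1, ← pow_add,
    ← neg_one_pow_eq_of_add_even (show pb + 2*(pa+1) = (pa+pb+1) + (pa+1) by ring)]

/-! ### omul negation -/

lemma omul_neg_left (f g : O p n t F) :
    omul p n t F (-f) g = -(omul p n t F f g) := by
  rw [← neg_one_smul F f, omul_smul_left, neg_one_smul]

lemma omul_neg_right (f g : O p n t F) :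
    omul p n t F f (-g) = -(omul p n t F f g) := by
  rw [← neg_one_smul F g, omul_smul_right, neg_one_smul]

/-! ### the odd Poisson bracket -/

noncomputable def PB (pa : ℕ) (a c : O p n t F) : O p n t F :=
  (∑ i : Fin n, ((-1:F)^pa) • omul p n t F (dOdd p n t F i a) (dEven p n t F i c))
  + ∑ j : Fin n, omul p n t F (dEven p n t F j a) (dOdd p n t F j c)

lemma act_TH_eq (pa : ℕ) (a c : O p n t F) :
    act p n t F (TH p n t F pa a) c = PB (F := F) pa a c := by
  rw [act, Fintype.sum_sum_type, PB]
  congr 1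
  · refine Finset.sum_congr rfl fun i _ => ?_
    show omul p n t F (TH p n t F pa a (Sum.inl i)) (dd p n t F (Sum.inl i) c) = _
    rw [TH, dd]
    simp only [Sum.elim_inl]
    rw [omul_smul_left]

lemma act_smul (X : W p n t F) (c : F) (v : O p n t F) :
    act p n t F X (c • v) = c • act p n t F X v := by
  rw [act, act, Finset.smul_sum]
  refine Finset.sum_congr rfl fun r _ => ?_
  have hdd : dd p n t F r (c • v) = c • dd p n t F r v := by
    rcases r with i | k
    · exact dEven_smul i c v
    · exact dOdd_smul k c v
  rw [hdd, omul_smul_right]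

lemma PB_antisymm {pa pb : ℕ} {a b : O p n t F} (ha : Homog p n t F pa a)
    (hb : Homog p n t F pb b) :
    PB (F := F) pa a b = (-((-1:F)^((pa+1)*(pb+1)))) • PB (F := F) pb b a := by
  unfold PB
  rw [smul_add, Finset.smul_sum, Finset.smul_sum]
  conv_rhs => rw [add_comm]
  congr 1
  · refine Finset.sum_congr rfl fun i _ => ?_
    rw [omul_comm (Homog_dOdd ha i) (Homog_dEven hb i), smul_smul]
    congr 1
    exact sgnA pa pb
  · refine Finset.sum_congr rfl fun j _ => ?_
    rw [omul_comm (Homog_dEven ha j) (Homog_dOdd hb j), smul_smul]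
    congr 1
    exact sgnB pa pb

lemma dEven_PB (hp : p.Prime) [CharP F p] (ht : ∀ j, 1 ≤ t j) (pa : ℕ) (k : Fin n)
    (a c : O p n t F) :
    dEven p n t F k (PB (F := F) pa a c)
      = PB (F := F) pa (dEven p n t F k a) c + PB (F := F) pa a (dEven p n t F k c) := by
  unfold PB
  rw [dEven_add, dEven_sum, dEven_sum]
  have h1 : ∀ i : Fin n,
      dEven p n t F k (((-1:F)^pa) • omul p n t F (dOdd p n t F i a) (dEven p n t F i c))
        = ((-1:F)^pa) • omul p n t F (dOdd p n t F i (dEven p n t F k a)) (dEven p n t F i c)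
          + ((-1:F)^pa) • omul p n t F (dOdd p n t F i a)
              (dEven p n t F i (dEven p n t F k c)) := by
    intro i
    rw [dEven_smul, dEven_omul hp ht k, dEven_dOdd k i a, dEven_dEven k i c, smul_add]
  have h2 : ∀ j : Fin n,
      dEven p n t F k (omul p n t F (dEven p n t F j a) (dOdd p n t F j c))
        = omul p n t F (dEven p n t F j (dEven p n t F k a)) (dOdd p n t F j c)
          + omul p n t F (dEven p n t F j a) (dOdd p n t F j (dEven p n t F k c)) := by
    intro j
    rw [dEven_omul hp ht k, dEven_dEven k j a, dEven_dOdd k j c]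
  rw [Finset.sum_congr rfl fun i _ => h1 i, Finset.sum_congr rfl fun j _ => h2 j,
    Finset.sum_add_distrib, Finset.sum_add_distrib]
  abel

lemma dOdd_PB (pa : ℕ) (i : Fin n) {a : O p n t F} (ha : Homog p n t F pa a)
    (c : O p n t F) :
    dOdd p n t F i (PB (F := F) pa a c)
      = PB (F := F) (pa+1) (dOdd p n t F i a) c
        + (-((-1:F)^pa)) • PB (F := F) pa a (dOdd p n t F i c) := by
  unfold PB
  rw [dOdd_add, dOdd_sum, dOdd_sum]
  have h1 : ∀ j : Fin n,
      dOdd p n t F i (((-1:F)^pa) • omul p n t F (dOdd p n t F j a) (dEven p n t F j c))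
        = ((-1:F)^(pa+1)) • omul p n t F (dOdd p n t F j (dOdd p n t F i a))
            (dEven p n t F j c)
          + (-((-1:F)^pa)) • (((-1:F)^pa) • omul p n t F (dOdd p n t F j a)
              (dEven p n t F j (dOdd p n t F i c))) := by
    intro j
    rw [dOdd_smul, dOdd_omul (Homog_dOdd ha j) i (dEven p n t F j c), dOdd_dOdd i j a,
      omul_neg_left, ← dEven_dOdd j i c, pow_succ]
    funext x
    simp only [Pi.add_apply, Pi.smul_apply, Pi.neg_apply, smul_eq_mul]
    ring
  have h2 : ∀ j : Fin n,
      dOdd p n t F i (omul p n t F (dEven p n t F j a) (dOdd p n t F j c))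
        = omul p n t F (dEven p n t F j (dOdd p n t F i a)) (dOdd p n t F j c)
          + (-((-1:F)^pa)) • omul p n t F (dEven p n t F j a)
              (dOdd p n t F j (dOdd p n t F i c)) := by
    intro j
    rw [dOdd_omul (Homog_dEven ha j) i (dOdd p n t F j c), dOdd_dOdd i j c,
      omul_neg_right, ← dEven_dOdd j i a]
    funext x
    simp only [Pi.add_apply, Pi.smul_apply, Pi.neg_apply, smul_eq_mul]
    ring
  rw [Finset.sum_congr rfl fun j _ => h1 j, Finset.sum_congr rfl fun j _ => h2 j,
    Finset.sum_add_distrib, Finset.sum_add_distrib, smul_add, Finset.smul_sum,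
    Finset.smul_sum]
  abel

end Stmt9Aux

/-- For homogeneous `a, b ∈ O(n,n;t̲)`: `[T_H(a), T_H(b)] = T_H(T_H(a)(b))`; in
particular `HO(n,n;t̲) = T_H(O(n,n;t̲))` is a subsuperalgebra of `W(n,n;t̲)`.
`T_H(a)` has parity `p(a) + 1`, and `T_H(a)(b)` has parity `p(a) + p(b) + 1`. -/
theorem stmt9 (p n : ℕ) (t : Fin n → ℕ) (F : Type*) [Field F]
    (hp : p.Prime) (hp3 : 3 < p) [CharP F p] (hn : 3 ≤ n) (ht : ∀ i, 1 ≤ t i)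
    (pa pb : ℕ) (a b : O p n t F)
    (ha : Homog p n t F pa a) (hb : Homog p n t F pb b) :
    brkH p n t F (pa + 1) (pb + 1) (TH p n t F pa a) (TH p n t F pb b) =
      TH p n t F (pa + pb + 1) (act p n t F (TH p n t F pa a) b) := by
  funext s
  rcases s with i | k
  · show act p n t F (TH p n t F pa a) (((-1:F)^pb) • dOdd p n t F i b)
        - ((-1:F)^((pa+1)*(pb+1))) • act p n t F (TH p n t F pb b)
            (((-1:F)^pa) • dOdd p n t F i a)
      = ((-1:F)^(pa+pb+1)) • dOdd p n t F i (act p n t F (TH p n t F pa a) b)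
    rw [Stmt9Aux.act_smul, Stmt9Aux.act_smul, Stmt9Aux.act_TH_eq, Stmt9Aux.act_TH_eq,
      Stmt9Aux.act_TH_eq, Stmt9Aux.dOdd_PB pa i ha b,
      Stmt9Aux.PB_antisymm (Stmt9Aux.Homog_dOdd ha i) hb]
    have hC := Stmt9Aux.sgnC (F := F) pa pb
    have hD := Stmt9Aux.sgnD (F := F) pa pb
    funext x
    simp only [Pi.add_apply, Pi.smul_apply, Pi.sub_apply, smul_eq_mul]
    linear_combination (- (Stmt9Aux.PB (F := F) pb b (dOdd p n t F i a) x)) * hD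
      - (Stmt9Aux.PB (F := F) pa a (dOdd p n t F i b) x) * hC
  · show act p n t F (TH p n t F pa a) (dEven p n t F k b)
        - ((-1:F)^((pa+1)*(pb+1))) • act p n t F (TH p n t F pb b) (dEven p n t F k a)
      = dEven p n t F k (act p n t F (TH p n t F pa a) b)
    rw [Stmt9Aux.act_TH_eq, Stmt9Aux.act_TH_eq, Stmt9Aux.act_TH_eq,
      Stmt9Aux.dEven_PB hp ht pa k a b,
      Stmt9Aux.PB_antisymm (Stmt9Aux.Homog_dEven ha k) hb]
    funext x
    simp only [Pi.add_apply, Pi.sub_apply, Pi.smul_apply, smul_eq_mul]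
    ring
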